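/- Let L be a nondegenerate even lattice, β, γ ∈ L° elements of the dual lattice, and 𝒴_β the standard lattice intertwining operator. Then 𝒴_{β,γ,ℤ} := e^{−πi⟨β,γ⟩} ε(γ,β)^{−1} 𝒴_β restricted to V_{β+L} ⊗ V_{γ+L} satisfies 𝒴_{β,γ,ℤ}(ι(e_β), x) ι(e_γ) = x^{⟨β,γ⟩} E^-(−β, x) ι(e_{β+γ}), a series whose coefficients are integer linear combinations of coefficients of products E^-(−β₁,x₁)⋯E^-(−β_k,x_k) ι(e_α e_{β+γ}) with β_i ∈ L° and α ∈ L. -/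

import Mathlib

open scoped BigOperators

/-- The coefficient of `x^n` in `exp(∑_{m ≥ 1} f(m) x^m)` for pairwise commuting operators
`f(m)`: the sum over partitions `(1^{m_1} 2^{m_2} ⋯)` of `n` of `∏_j f(j)^{m_j}/(j^{m_j} m_j!)`. -/
noncomputable def expCoeff {V : Type} [AddCommGroup V] [Module ℂ V]
    (f : ℕ → Module.End ℂ V) (n : ℕ) : Module.End ℂ V :=
  ∑ Λ : Nat.Partition n,
    (∏ j ∈ Λ.parts.toFinset,
      (((j : ℂ)) ^ (Λ.parts.count j) * (Nat.factorial (Λ.parts.count j) : ℂ))⁻¹) •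
      (Λ.parts.toList.map f).prod

/-- Coefficient of `x^{-p}` in `E^+(−β,x) = exp(∑_{n > 0} (−β(n)/n) x^{-n})`. -/
noncomputable def EplusC {V : Type} [AddCommGroup V] [Module ℂ V] {H : Type}
    (a : H → ℤ → Module.End ℂ V) (β : H) (p : ℕ) : Module.End ℂ V :=
  expCoeff (fun j => -(a β (j : ℤ))) p

/-- Coefficient of `x^{n}` in `E^-(−β,x) = exp(∑_{n > 0} (−β(−n)/n) x^{n})`. -/
noncomputable def EminusC {V : Type} [AddCommGroup V] [Module ℂ V] {H : Type}
    (a : H → ℤ → Module.End ℂ V) (β : H) (n : ℕ) : Module.End ℂ V :=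
  expCoeff (fun j => -(a β (-(j : ℤ)))) n


open scoped BigOperators

lemma listProd_apply_zero {V : Type} [AddCommGroup V] [Module ℂ V]
    (f : ℕ → Module.End ℂ V) (v : V) (hf : ∀ m, 0 < m → f m v = 0) :
    ∀ l : List ℕ, l ≠ [] → (∀ m ∈ l, 0 < m) → ((l.map f).prod) v = 0 := by
  intro l
  induction l with
  | nil => simp
  | cons x xs ih =>
    intro _ hpos
    cases xs with
    | nil => simpa using hf x (hpos x (by simp))
    | cons y ys =>
      have h0 : ((List.map f (y :: ys)).prod) v = 0 :=
        ih (by simp) (fun m hm => hpos m (by simp [hm]))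
      rw [List.map_cons, List.prod_cons, Module.End.mul_apply, h0, map_zero]

lemma expCoeff_apply_zero {V : Type} [AddCommGroup V] [Module ℂ V]
    (f : ℕ → Module.End ℂ V) (v : V) (hf : ∀ m, 0 < m → f m v = 0)
    (p : ℕ) (hp : 0 < p) : expCoeff f p v = 0 := by
  unfold expCoeff
  rw [LinearMap.sum_apply]
  refine Finset.sum_eq_zero fun Λ _ => ?_
  rw [LinearMap.smul_apply]
  have hne : Λ.parts.toList ≠ [] := by
    intro h
    have : Λ.parts = 0 := by
      have := congrArg Multiset.ofList h
      simpa using this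
    have hsum := Λ.parts_sum
    rw [this] at hsum
    simp at hsum
    omega
  rw [listProd_apply_zero f v hf _ hne
    (fun m hm => Λ.parts_pos (by simpa using hm)), smul_zero]

lemma expCoeff_zero_apply {V : Type} [AddCommGroup V] [Module ℂ V]
    (f : ℕ → Module.End ℂ V) (v : V) : expCoeff f 0 v = v := by
  unfold expCoeff
  rw [Finset.sum_eq_single_of_mem default (Finset.mem_univ _)
    (fun b _ hb => absurd (Subsingleton.elim b default) hb)]
  have : (default : Nat.Partition 0).parts = 0 := Nat.Partition.partition_zero_parts _
  simp [this]
/-- for `β, γ ∈ L°`, the renormalized lattice intertwining operator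
`𝒴_{β,γ,ℤ} = e^{−πi⟨β,γ⟩} ε(γ,β)^{−1} 𝒴_β` satisfies
`𝒴_{β,γ,ℤ}(ι(e_β), x) ι(e_γ) = x^{⟨β,γ⟩} E^-(−β, x) ι(e_{β+γ})`, a series whose coefficients
are integer linear combinations of coefficients of products
`E^-(−β₁,x₁)⋯E^-(−β_k,x_k) ι(e_α e_{β+γ})` with `β_i ∈ L°`, `α ∈ L`.
Series with complex powers are represented by their coefficient functions `ℂ → V`. -/
theorem lattice_integral_intertwining_operator
    (V : Type) [AddCommGroup V] [Module ℂ V]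
    (L Ld : Type) [AddCommGroup L] [AddCommGroup Ld]
    (incl : L →+ Ld) (B : Ld → Ld → ℚ)
    (a : Ld → ℤ → Module.End ℂ V) (e : Ld → V)
    (eps : Ld → Ld → ℂ) (eMul : Ld → Module.End ℂ V)
    (heps : ∀ δ ξ : Ld, eps δ ξ ≠ 0)
    (hbm1 : ∀ δ δ' ξ : Ld, eps (δ + δ') ξ = eps δ ξ * eps δ' ξ)
    (hbm2 : ∀ δ ξ ξ' : Ld, eps δ (ξ + ξ') = eps δ ξ * eps δ ξ')
    (heMul : ∀ δ ξ : Ld, eMul δ (e ξ) = eps δ ξ • e (δ + ξ))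
    (hann : ∀ (δ ξ : Ld) (n : ℤ), 0 < n → a δ n (e ξ) = 0)
    (β γ : Ld)
    (Ycomp : ℂ → V)
    -- `Ycomp` is the coefficient family of
    -- `𝒴_β(ι(e_β),x)ι(e_γ) = E^-(−β,x)E^+(−β,x) e_β x^β e^{πiβ} c(·,β) ι(e_γ)`:
    (hY1 : ∀ n : ℕ,
      Ycomp (((B β γ : ℚ) : ℂ) + n)
        = (Complex.exp (Real.pi * Complex.I * ((B β γ : ℚ) : ℂ))
            * (eps γ β * (eps β γ)⁻¹) * eps β γ) •
            ∑ᶠ j : ℕ, (EminusC a β (n + j)) ((EplusC a β j) (e (β + γ))))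
    (hY2 : ∀ t : ℂ, (∀ n : ℕ, t ≠ ((B β γ : ℚ) : ℂ) + n) → Ycomp t = 0) :
    let YZ : ℂ → V := fun t =>
      (Complex.exp (-(Real.pi * Complex.I * ((B β γ : ℚ) : ℂ))) * (eps γ β)⁻¹) • Ycomp t
    (∀ n : ℕ, YZ (((B β γ : ℚ) : ℂ) + n) = (EminusC a β n) (e (β + γ))) ∧
    (∀ t : ℂ, (∀ n : ℕ, t ≠ ((B β γ : ℚ) : ℂ) + n) → YZ t = 0) ∧
    (∀ t : ℂ, YZ t ∈ Submodule.span ℤ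
      {v : V | ∃ (k : ℕ) (βs : Fin k → Ld) (ns : Fin k → ℕ) (α : L),
        v = (List.ofFn fun i => EminusC a (βs i) (ns i)).prod
              ((eMul (incl α)) (e (β + γ)))}) := by

  intro YZ
  have hEplusPos : ∀ (j : ℕ), 0 < j → EplusC a β j (e (β+γ)) = 0 := fun j hj =>
    expCoeff_apply_zero _ _ (fun m hm => by
      simp [hann β (β+γ) m (by exact_mod_cast hm)]) j hj
  have hfin : ∀ n : ℕ, (∑ᶠ j : ℕ, (EminusC a β (n + j)) ((EplusC a β j) (e (β + γ))))
      = EminusC a β n (e (β+γ)) := by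
    intro n
    rw [finsum_eq_single _ 0 (fun j hj => by
      rw [hEplusPos j (Nat.pos_of_ne_zero hj), map_zero])]
    rw [show (EplusC a β 0) (e (β+γ)) = e (β+γ) from expCoeff_zero_apply _ _]
    simp
  have hscal : (Complex.exp (-(Real.pi * Complex.I * ((B β γ : ℚ) : ℂ))) * (eps γ β)⁻¹) *
      (Complex.exp (Real.pi * Complex.I * ((B β γ : ℚ) : ℂ))
        * (eps γ β * (eps β γ)⁻¹) * eps β γ) = 1 := by
    rw [Complex.exp_neg]
    field_simp
    exact div_self (mul_ne_zero (heps γ β) (heps β γ))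
  have h1 : ∀ n : ℕ, YZ (((B β γ : ℚ) : ℂ) + n) = (EminusC a β n) (e (β + γ)) := by
    intro n
    show _ • Ycomp _ = _
    rw [hY1 n, hfin n, smul_smul, hscal, one_smul]
  refine ⟨h1, ?_, ?_⟩
  · intro t ht
    show _ • Ycomp t = _
    rw [hY2 t ht, smul_zero]
  · intro t
    by_cases h : ∃ n : ℕ, t = ((B β γ : ℚ) : ℂ) + n
    · obtain ⟨n, rfl⟩ := h
      rw [h1 n]
      apply Submodule.subset_span
      refine ⟨1, fun _ => β, fun _ => n, 0, ?_⟩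
      have he0 : eps 0 (β + γ) = 1 := by
        have h2 := hbm1 0 0 (β + γ)
        rw [zero_add] at h2
        exact (mul_left_cancel₀ (heps 0 (β+γ)) (by rw [← h2, mul_one])).symm
      simp [heMul, he0]
    · push_neg at h
      have hz : YZ t = 0 := by
        show _ • Ycomp t = (0:V)
        rw [hY2 t h, smul_zero]
      rw [hz]
      exact Submodule.zero_mem _
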